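/- Let 𝔤 be a nilpotent Lie algebra of step s, and let Aut(F_{k,s})(ℝ) denote the group of Lie algebra automorphisms of the free s-step nilpotent Lie algebra F_{k,s} on k generators, acting on 𝔤^k by substitution. If k ≥ dim(𝔤/[𝔤,𝔤]), then any two k-tuples X, X' ∈ 𝔤^k whose reductions modulo [𝔤,𝔤] each span 𝔤/[𝔤,𝔤] lie in the same Aut(F_{k,s})(ℝ)-orbit; in particular Aut(F_{k,s})(ℝ) has a Zariski-open (and Lebesgue co-null) orbit on 𝔤^k. -/

import Mathlib

open LieModule

section IdealLemmas

variable {L : Type*} [LieRing L] [LieAlgebra ℝ L]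

lemma lie_lie_le_aux (I J N : LieIdeal ℝ L) :
    ⁅(⁅I, J⁆ : LieIdeal ℝ L), N⁆ ≤ ⁅I, ⁅J, N⁆⁆ ⊔ ⁅J, ⁅I, N⁆⁆ := by
  set K : LieIdeal ℝ L := ⁅I, ⁅J, N⁆⁆ ⊔ ⁅J, ⁅I, N⁆⁆ with hK
  let S : LieSubmodule ℝ L L :=
    { carrier := {x : L | ∀ n ∈ N, ⁅x, n⁆ ∈ K}
      add_mem' := fun ha hb n hn => by
        rw [add_lie]; exact K.add_mem (ha n hn) (hb n hn)
      zero_mem' := fun n hn => by rw [zero_lie]; exact K.zero_mem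
      smul_mem' := fun t a ha n hn => by rw [smul_lie]; exact K.smul_mem t (ha n hn)
      lie_mem := by
        intro z x hx
        intro n hn
        have h1 : ⁅⁅z, x⁆, n⁆ = ⁅z, ⁅x, n⁆⁆ - ⁅x, ⁅z, n⁆⁆ := by
          rw [leibniz_lie z x n]; abel
        rw [h1]
        exact K.sub_mem (K.lie_mem (hx n hn)) (hx ⁅z, n⁆ (N.lie_mem hn)) }
  have hIJ : (⁅I, J⁆ : LieIdeal ℝ L) ≤ S := by
    rw [LieSubmodule.lieIdeal_oper_eq_span, LieSubmodule.lieSpan_le]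
    rintro _ ⟨⟨a, ha⟩, ⟨b, hb⟩, rfl⟩
    intro n hn
    have h1 : ⁅⁅a, b⁆, n⁆ = ⁅a, ⁅b, n⁆⁆ - ⁅b, ⁅a, n⁆⁆ := by
      rw [leibniz_lie a b n]; abel
    rw [h1]
    exact K.sub_mem
      (le_sup_left (α := LieIdeal ℝ L)
        (LieSubmodule.lie_mem_lie ha (LieSubmodule.lie_mem_lie hb hn)))
      (le_sup_right (α := LieIdeal ℝ L)
        (LieSubmodule.lie_mem_lie hb (LieSubmodule.lie_mem_lie ha hn)))
  rw [LieSubmodule.lie_le_iff]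
  intro x hx m hm
  exact hIJ hx m hm

lemma lcs_lie_le (i j : ℕ) :
    ⁅(lowerCentralSeries ℝ L L i : LieIdeal ℝ L), (lowerCentralSeries ℝ L L j : LieIdeal ℝ L)⁆ ≤
      lowerCentralSeries ℝ L L (i + j + 1) := by
  induction i generalizing j with
  | zero =>
    rw [lowerCentralSeries_zero]
    rw [show 0 + j + 1 = j + 1 by omega, LieModule.lowerCentralSeries_succ]
  | succ i ih =>
    calc ⁅(lowerCentralSeries ℝ L L (i + 1) : LieIdeal ℝ L),
            (lowerCentralSeries ℝ L L j : LieIdeal ℝ L)⁆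
        = ⁅(⁅(⊤ : LieIdeal ℝ L), (lowerCentralSeries ℝ L L i : LieIdeal ℝ L)⁆ : LieIdeal ℝ L),
            (lowerCentralSeries ℝ L L j : LieIdeal ℝ L)⁆ := by rw [LieModule.lowerCentralSeries_succ]
      _ ≤ ⁅(⊤ : LieIdeal ℝ L), ⁅(lowerCentralSeries ℝ L L i : LieIdeal ℝ L),
            (lowerCentralSeries ℝ L L j : LieIdeal ℝ L)⁆⁆ ⊔
          ⁅(lowerCentralSeries ℝ L L i : LieIdeal ℝ L),
            ⁅(⊤ : LieIdeal ℝ L), (lowerCentralSeries ℝ L L j : LieIdeal ℝ L)⁆⁆ :=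
        lie_lie_le_aux _ _ _
      _ ≤ lowerCentralSeries ℝ L L (i + 1 + j + 1) := by
        apply sup_le
        · calc ⁅(⊤ : LieIdeal ℝ L), ⁅(lowerCentralSeries ℝ L L i : LieIdeal ℝ L),
                (lowerCentralSeries ℝ L L j : LieIdeal ℝ L)⁆⁆
              ≤ ⁅(⊤ : LieIdeal ℝ L), (lowerCentralSeries ℝ L L (i + j + 1) : LieIdeal ℝ L)⁆ :=
              LieSubmodule.mono_lie_right _ (ih j)
            _ = lowerCentralSeries ℝ L L (i + j + 1 + 1) :=
              (LieModule.lowerCentralSeries_succ ℝ L L (i + j + 1)).symm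
            _ = lowerCentralSeries ℝ L L (i + 1 + j + 1) := by
              rw [show i + j + 1 + 1 = i + 1 + j + 1 by omega]
        · calc ⁅(lowerCentralSeries ℝ L L i : LieIdeal ℝ L),
                ⁅(⊤ : LieIdeal ℝ L), (lowerCentralSeries ℝ L L j : LieIdeal ℝ L)⁆⁆
              = ⁅(lowerCentralSeries ℝ L L i : LieIdeal ℝ L),
                (lowerCentralSeries ℝ L L (j + 1) : LieIdeal ℝ L)⁆ := by
                rw [LieModule.lowerCentralSeries_succ]
            _ ≤ lowerCentralSeries ℝ L L (i + (j + 1) + 1) := ih (j + 1)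
            _ = lowerCentralSeries ℝ L L (i + 1 + j + 1) := by
              rw [show i + (j + 1) + 1 = i + 1 + j + 1 by omega]

end IdealLemmas

section Generation

variable {L : Type*} [LieRing L] [LieAlgebra ℝ L]

lemma lcs_le_subalg_sup (H : LieSubalgebra ℝ L)
    (h : H.toSubmodule ⊔ (LieSubmodule.toSubmodule (lowerCentralSeries ℝ L L 1)) = ⊤) (m : ℕ) :
    (LieSubmodule.toSubmodule (lowerCentralSeries ℝ L L m)) ≤
      (H.toSubmodule ⊓ (LieSubmodule.toSubmodule (lowerCentralSeries ℝ L L m))) ⊔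
        (LieSubmodule.toSubmodule (lowerCentralSeries ℝ L L (m + 1))) := by
  induction m with
  | zero =>
    rw [lowerCentralSeries_zero]
    intro x _
    have hx : x ∈ H.toSubmodule ⊔ (LieSubmodule.toSubmodule (lowerCentralSeries ℝ L L 1)) := by
      rw [h]; trivial
    obtain ⟨a, ha, c, hc, rfl⟩ := Submodule.mem_sup.1 hx
    refine Submodule.add_mem _ (Submodule.mem_sup_left ?_) (Submodule.mem_sup_right hc)
    exact Submodule.mem_inf.2 ⟨ha, trivial⟩
  | succ m ih =>
    have hspan : (LieSubmodule.toSubmodule (lowerCentralSeries ℝ L L (m + 1))) =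
        Submodule.span ℝ {x | ∃ a ∈ (⊤ : LieIdeal ℝ L),
          ∃ b ∈ lowerCentralSeries ℝ L L m, ⁅a, b⁆ = x} := by
      rw [LieModule.lowerCentralSeries_succ, LieSubmodule.lieIdeal_oper_eq_linear_span']
    refine hspan.trans_le (Submodule.span_le.2 ?_)
    rintro _ ⟨a, -, b, hb, rfl⟩
    -- decompose a
    have hamem : a ∈ H.toSubmodule ⊔ (LieSubmodule.toSubmodule (lowerCentralSeries ℝ L L 1)) := by
      rw [h]; trivial
    obtain ⟨a₁, ha₁, a₂, ha₂, rfl⟩ := Submodule.mem_sup.1 hamem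
    obtain ⟨b₁, hb₁, b₂, hb₂, rfl⟩ := Submodule.mem_sup.1 (ih hb)
    obtain ⟨hb₁H, hb₁c⟩ := Submodule.mem_inf.1 hb₁
    have expand : ⁅a₁ + a₂, b₁ + b₂⁆ = ⁅a₁, b₁⁆ + (⁅a₁, b₂⁆ + (⁅a₂, b₁⁆ + ⁅a₂, b₂⁆)) := by
      rw [add_lie, lie_add, lie_add]; abel
    rw [SetLike.mem_coe, expand]
    have hmem2 : ∀ y : L, y ∈ lowerCentralSeries ℝ L L (m + 2) →
        y ∈ (H.toSubmodule ⊓ (LieSubmodule.toSubmodule (lowerCentralSeries ℝ L L (m + 1)))) ⊔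
          (LieSubmodule.toSubmodule (lowerCentralSeries ℝ L L (m + 1 + 1))) := fun y hy =>
      Submodule.mem_sup_right ((LieSubmodule.mem_toSubmodule _).2 hy)
    refine Submodule.add_mem _ ?_ (Submodule.add_mem _ ?_ (Submodule.add_mem _ ?_ ?_))
    · refine Submodule.mem_sup_left (Submodule.mem_inf.2 ⟨H.lie_mem' ha₁ hb₁H, ?_⟩)
      rw [LieSubmodule.mem_toSubmodule] at hb₁c ⊢
      rw [LieModule.lowerCentralSeries_succ]
      exact LieSubmodule.lie_mem_lie trivial hb₁c
    · apply hmem2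
      rw [LieSubmodule.mem_toSubmodule] at hb₂
      rw [show m + 2 = (m + 1) + 1 by omega, LieModule.lowerCentralSeries_succ]
      exact LieSubmodule.lie_mem_lie trivial hb₂
    · apply hmem2
      rw [LieSubmodule.mem_toSubmodule] at ha₂ hb₁c
      have := lcs_lie_le (L := L) 1 m (LieSubmodule.lie_mem_lie ha₂ hb₁c)
      rwa [show 1 + m + 1 = m + 2 by omega] at this
    · apply hmem2
      rw [LieSubmodule.mem_toSubmodule] at ha₂ hb₂
      have := lcs_lie_le (L := L) 1 (m + 1) (LieSubmodule.lie_mem_lie ha₂ hb₂)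
      rw [show 1 + (m + 1) + 1 = m + 3 by omega] at this
      exact LieModule.antitone_lowerCentralSeries ℝ L L (by omega : m + 2 ≤ m + 3) this

lemma subalg_eq_top_of_sup_derived {s : ℕ} (H : LieSubalgebra ℝ L)
    (hnil : lowerCentralSeries ℝ L L s = ⊥)
    (h : H.toSubmodule ⊔ (LieSubmodule.toSubmodule (lowerCentralSeries ℝ L L 1)) = ⊤) : H = ⊤ := by
  have key : ∀ m : ℕ, (⊤ : Submodule ℝ L) ≤
      H.toSubmodule ⊔ (LieSubmodule.toSubmodule (lowerCentralSeries ℝ L L m)) := by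
    intro m
    induction m with
    | zero => rw [lowerCentralSeries_zero]; exact le_sup_right (α := Submodule ℝ L)
    | succ m ih =>
      refine ih.trans ?_
      refine sup_le le_sup_left ?_
      refine (lcs_le_subalg_sup H h m).trans (sup_le ?_ le_sup_right)
      exact le_trans inf_le_left le_sup_left
  have := key s
  rw [hnil] at this
  have htop : H.toSubmodule = ⊤ := by
    rw [eq_top_iff]
    simpa using this
  rw [← LieSubalgebra.toSubmodule_inj, htop, LieSubalgebra.top_toSubmodule]

end Generation

section SpanSup

variable {L : Type*} [LieRing L] [LieAlgebra ℝ L]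

lemma lieHom_mem_lcs {L' : Type*} [LieRing L'] [LieAlgebra ℝ L'] (f : L →ₗ⁅ℝ⁆ L') (m : ℕ) {x : L}
    (hx : x ∈ lowerCentralSeries ℝ L L m) : f x ∈ lowerCentralSeries ℝ L' L' m :=
  LieIdeal.map_lowerCentralSeries_le m (LieIdeal.mem_map hx)

lemma span_sup_lcs_one (S : Set L) (h : LieSubalgebra.lieSpan ℝ L S = ⊤) :
    Submodule.span ℝ S ⊔ LieSubmodule.toSubmodule (lowerCentralSeries ℝ L L 1) = ⊤ := by
  let W : LieSubalgebra ℝ L :=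
    { toSubmodule := Submodule.span ℝ S ⊔ LieSubmodule.toSubmodule (lowerCentralSeries ℝ L L 1)
      lie_mem' := fun {x y} _ _ => Submodule.mem_sup_right (by
        rw [LieSubmodule.mem_toSubmodule, LieModule.lowerCentralSeries_succ]
        exact LieSubmodule.lie_mem_lie (LieSubmodule.mem_top x) (LieSubmodule.mem_top y)) }
  have hle : (⊤ : LieSubalgebra ℝ L) ≤ W := by
    rw [← h]
    exact LieSubalgebra.lieSpan_le.2
      (fun x hx => Submodule.mem_sup_left (Submodule.subset_span hx))
  rw [eq_top_iff]
  intro x _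
  exact hle trivial

end SpanSup

section QuotientLie

variable {L : Type*} [LieRing L] [LieAlgebra ℝ L] {L' : Type*} [LieRing L'] [LieAlgebra ℝ L']

/-- The quotient map by a Lie ideal, as a Lie algebra homomorphism. -/
def lieQuotMk (I : LieIdeal ℝ L) : L →ₗ⁅ℝ⁆ (L ⧸ I) :=
  { (LieSubmodule.toSubmodule I).mkQ with
    map_lie' := fun {_ _} => rfl }

lemma lieQuotMk_surjective (I : LieIdeal ℝ L) : Function.Surjective (lieQuotMk I) :=
  Submodule.Quotient.mk_surjective _

/-- Lifting a Lie algebra hom to the quotient. -/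
def lieQuotLift (I : LieIdeal ℝ L) (f : L →ₗ⁅ℝ⁆ L') (h : ∀ x ∈ I, f x = 0) :
    (L ⧸ I) →ₗ⁅ℝ⁆ L' :=
  { Submodule.liftQ (LieSubmodule.toSubmodule I) f.toLinearMap
      (fun x hx => by simpa using h x hx) with
    map_lie' := by
      rintro ⟨x⟩ ⟨y⟩
      exact f.map_lie x y }

@[simp] lemma lieQuotLift_mk (I : LieIdeal ℝ L) (f : L →ₗ⁅ℝ⁆ L') (h) (x : L) :
    lieQuotLift I f h (lieQuotMk I x) = f x := rfl

end QuotientLie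

/-- The free `s`-step nilpotent Lie algebra on `k` generators over `ℝ`. -/
abbrev FreeNilpotentLie (k s : ℕ) :=
  FreeLieAlgebra ℝ (Fin k) ⧸
    LieModule.lowerCentralSeries ℝ (FreeLieAlgebra ℝ (Fin k)) (FreeLieAlgebra ℝ (Fin k)) s

/-- The images of the free generators in the free `s`-step nilpotent Lie algebra. -/
noncomputable def freeNilpotentGen (k s : ℕ) (i : Fin k) : FreeNilpotentLie k s :=
  LieSubmodule.Quotient.mk'
    (LieModule.lowerCentralSeries ℝ (FreeLieAlgebra ℝ (Fin k)) (FreeLieAlgebra ℝ (Fin k)) s)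
    (FreeLieAlgebra.of ℝ i)

namespace FreeNilpAux

variable (k s : ℕ)

lemma gen_eq (i : Fin k) :
    freeNilpotentGen k s i =
      lieQuotMk (lowerCentralSeries ℝ (FreeLieAlgebra ℝ (Fin k)) (FreeLieAlgebra ℝ (Fin k)) s)
        (FreeLieAlgebra.of ℝ i) := rfl

lemma F_lcs_bot :
    lowerCentralSeries ℝ (FreeNilpotentLie k s) (FreeNilpotentLie k s) s = ⊥ := by
  set I := lowerCentralSeries ℝ (FreeLieAlgebra ℝ (Fin k)) (FreeLieAlgebra ℝ (Fin k)) s with hI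
  rw [← LieIdeal.lowerCentralSeries_map_eq s (lieQuotMk_surjective I), eq_bot_iff,
    LieIdeal.map_le]
  rintro _ ⟨x, hx, rfl⟩
  exact (LieSubmodule.mem_bot _).2 ((Submodule.Quotient.mk_eq_zero _).2 hx)

/-- The endomorphism of the free nilpotent Lie algebra sending generators to `Y`. -/
noncomputable def endo (Y : Fin k → FreeNilpotentLie k s) :
    FreeNilpotentLie k s →ₗ⁅ℝ⁆ FreeNilpotentLie k s :=
  lieQuotLift _ (FreeLieAlgebra.lift ℝ Y) (fun x hx => by
    have h3 : (FreeLieAlgebra.lift ℝ Y) x ∈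
        lowerCentralSeries ℝ (FreeNilpotentLie k s) (FreeNilpotentLie k s) s :=
      lieHom_mem_lcs _ s hx
    rw [F_lcs_bot] at h3
    exact (LieSubmodule.mem_bot _).1 h3)

@[simp] lemma endo_gen (Y : Fin k → FreeNilpotentLie k s) (i : Fin k) :
    endo k s Y (freeNilpotentGen k s i) = Y i := by
  rw [gen_eq, endo, lieQuotLift_mk]
  exact FreeLieAlgebra.lift_of_apply Y i

lemma gen_lieSpan_top :
    LieSubalgebra.lieSpan ℝ (FreeNilpotentLie k s) (Set.range (freeNilpotentGen k s)) = ⊤ := by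
  set Free := FreeLieAlgebra ℝ (Fin k)
  have hfree : LieSubalgebra.lieSpan ℝ Free (Set.range (FreeLieAlgebra.of ℝ)) = ⊤ := by
    set K := LieSubalgebra.lieSpan ℝ Free (Set.range (FreeLieAlgebra.of ℝ)) with hK
    have hmem : ∀ i : Fin k, FreeLieAlgebra.of ℝ i ∈ K :=
      fun i => LieSubalgebra.subset_lieSpan ⟨i, rfl⟩
    set g : Free →ₗ⁅ℝ⁆ K := FreeLieAlgebra.lift ℝ (fun i => (⟨FreeLieAlgebra.of ℝ i, hmem i⟩ : K))
    have hcomp : K.incl.comp g = LieHom.id := by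
      apply FreeLieAlgebra.hom_ext
      intro i
      simp [g, FreeLieAlgebra.lift_of_apply, LieHom.comp_apply]
    rw [eq_top_iff]
    intro x _
    have := LieHom.congr_fun hcomp x
    rw [LieHom.comp_apply, LieHom.id_apply] at this
    rw [← this]
    exact (g x).2
  have hcm : LieSubalgebra.lieSpan ℝ Free (Set.range (FreeLieAlgebra.of ℝ)) ≤
      LieSubalgebra.comap (lieQuotMk (lowerCentralSeries ℝ Free Free s))
        (LieSubalgebra.lieSpan ℝ (FreeNilpotentLie k s) (Set.range (freeNilpotentGen k s))) := by
    refine LieSubalgebra.lieSpan_le.2 ?_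
    rintro _ ⟨i, rfl⟩
    show lieQuotMk _ (FreeLieAlgebra.of ℝ i) ∈
      LieSubalgebra.lieSpan ℝ (FreeNilpotentLie k s) (Set.range (freeNilpotentGen k s))
    exact LieSubalgebra.subset_lieSpan ⟨i, rfl⟩
  rw [eq_top_iff]
  intro y _
  obtain ⟨x, rfl⟩ := lieQuotMk_surjective (lowerCentralSeries ℝ Free Free s) y
  exact hcm (hfree ▸ trivial)

end FreeNilpAux

namespace FreeNilpAux

variable (k s : ℕ)

lemma span_gen_sup :
    Submodule.span ℝ (Set.range (freeNilpotentGen k s)) ⊔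
      LieSubmodule.toSubmodule
        (lowerCentralSeries ℝ (FreeNilpotentLie k s) (FreeNilpotentLie k s) 1) = ⊤ :=
  span_sup_lcs_one _ (gen_lieSpan_top k s)

lemma delta_mem (f g : FreeNilpotentLie k s →ₗ⁅ℝ⁆ FreeNilpotentLie k s)
    (h : ∀ i, f (freeNilpotentGen k s i) - g (freeNilpotentGen k s i) ∈
      lowerCentralSeries ℝ (FreeNilpotentLie k s) (FreeNilpotentLie k s) 1) :
    ∀ m, ∀ x ∈ lowerCentralSeries ℝ (FreeNilpotentLie k s) (FreeNilpotentLie k s) m,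
      f x - g x ∈ lowerCentralSeries ℝ (FreeNilpotentLie k s) (FreeNilpotentLie k s) (m + 1) := by
  have claim0 : ∀ x : FreeNilpotentLie k s, f x - g x ∈ lowerCentralSeries ℝ (FreeNilpotentLie k s) (FreeNilpotentLie k s) 1 := by
    set U : Submodule ℝ (FreeNilpotentLie k s) := Submodule.comap (f.toLinearMap - g.toLinearMap)
      (LieSubmodule.toSubmodule (lowerCentralSeries ℝ (FreeNilpotentLie k s) (FreeNilpotentLie k s) 1)) with hU
    have hU1 : Submodule.span ℝ (Set.range (freeNilpotentGen k s)) ≤ U := by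
      refine Submodule.span_le.2 ?_
      rintro _ ⟨i, rfl⟩
      show _ ∈ U
      rw [hU, Submodule.mem_comap]
      simpa using h i
    have hU2 : LieSubmodule.toSubmodule (lowerCentralSeries ℝ (FreeNilpotentLie k s) (FreeNilpotentLie k s) 1) ≤ U := by
      intro x hx
      rw [hU, Submodule.mem_comap]
      rw [LieSubmodule.mem_toSubmodule] at hx
      simp only [LinearMap.sub_apply, LieHom.coe_toLinearMap]
      rw [LieSubmodule.mem_toSubmodule]
      exact sub_mem (lieHom_mem_lcs f 1 hx) (lieHom_mem_lcs g 1 hx)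
    have htop : (⊤ : Submodule ℝ (FreeNilpotentLie k s)) ≤ U := by
      rw [← span_gen_sup k s]
      exact sup_le hU1 hU2
    intro x
    have := htop (Submodule.mem_top (x := x))
    rw [hU, Submodule.mem_comap] at this
    simpa using this
  intro m
  induction m with
  | zero => intro x _; exact claim0 x
  | succ m ih =>
    have key : LieSubmodule.toSubmodule (lowerCentralSeries ℝ (FreeNilpotentLie k s) (FreeNilpotentLie k s) (m + 1)) ≤
        Submodule.comap (f.toLinearMap - g.toLinearMap)
          (LieSubmodule.toSubmodule (lowerCentralSeries ℝ (FreeNilpotentLie k s) (FreeNilpotentLie k s) (m + 2))) := by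
      have hspan : LieSubmodule.toSubmodule (lowerCentralSeries ℝ (FreeNilpotentLie k s) (FreeNilpotentLie k s) (m + 1)) =
          Submodule.span ℝ {x | ∃ a ∈ (⊤ : LieIdeal ℝ (FreeNilpotentLie k s)),
            ∃ b ∈ lowerCentralSeries ℝ (FreeNilpotentLie k s) (FreeNilpotentLie k s) m, ⁅a, b⁆ = x} := by
        rw [LieModule.lowerCentralSeries_succ, LieSubmodule.lieIdeal_oper_eq_linear_span']
      refine hspan.trans_le (Submodule.span_le.2 ?_)
      rintro _ ⟨a, -, b, hb, rfl⟩
      show _ ∈ Submodule.comap _ _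
      rw [Submodule.mem_comap]
      simp only [LinearMap.sub_apply, LieHom.coe_toLinearMap]
      rw [LieSubmodule.mem_toSubmodule]
      have hkey : f ⁅a, b⁆ - g ⁅a, b⁆ = ⁅f a - g a, f b⁆ + ⁅g a, f b - g b⁆ := by
        have h1 : ⁅f a - g a, f b⁆ = ⁅f a, f b⁆ - ⁅g a, f b⁆ := sub_lie (L := FreeNilpotentLie k s) (f a) (g a) (f b)
        have h2 : ⁅g a, f b - g b⁆ = ⁅g a, f b⁆ - ⁅g a, g b⁆ := lie_sub (L := FreeNilpotentLie k s) (M := FreeNilpotentLie k s) (g a) (f b) (g b)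
        rw [LieHom.map_lie, LieHom.map_lie, h1, h2]
        abel
      rw [hkey]
      refine add_mem ?_ ?_
      · have h1 : ⁅f a - g a, f b⁆ ∈
            ⁅(lowerCentralSeries ℝ (FreeNilpotentLie k s) (FreeNilpotentLie k s) 1 : LieIdeal ℝ (FreeNilpotentLie k s)), lowerCentralSeries ℝ (FreeNilpotentLie k s) (FreeNilpotentLie k s) m⁆ :=
          LieSubmodule.lie_mem_lie (claim0 a) (lieHom_mem_lcs f m hb)
        have := lcs_lie_le (L := FreeNilpotentLie k s) 1 m h1
        rwa [show 1 + m + 1 = m + 2 by omega] at this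
      · have h2 : f b - g b ∈ lowerCentralSeries ℝ (FreeNilpotentLie k s) (FreeNilpotentLie k s) (m + 1) := ih b hb
        rw [show m + 2 = (m + 1) + 1 by omega, LieModule.lowerCentralSeries_succ]
        exact LieSubmodule.lie_mem_lie (LieSubmodule.mem_top _) h2
    intro x hx
    have := key ((LieSubmodule.mem_toSubmodule _).2 hx)
    rw [Submodule.mem_comap] at this
    simpa using this

lemma unipotent_bij (ψ : FreeNilpotentLie k s →ₗ⁅ℝ⁆ FreeNilpotentLie k s)
    (h : ∀ i, ψ (freeNilpotentGen k s i) - freeNilpotentGen k s i ∈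
      lowerCentralSeries ℝ (FreeNilpotentLie k s) (FreeNilpotentLie k s) 1) :
    Function.Bijective ψ := by
  have hδ := delta_mem k s ψ LieHom.id (by simpa using h)
  set N : Module.End ℝ (FreeNilpotentLie k s) := ψ.toLinearMap - LinearMap.id with hNdef
  have hN : ∀ m, ∀ x ∈ lowerCentralSeries ℝ (FreeNilpotentLie k s) (FreeNilpotentLie k s) m, N x ∈ lowerCentralSeries ℝ (FreeNilpotentLie k s) (FreeNilpotentLie k s) (m + 1) := by
    intro m x hx
    simpa [hNdef] using hδ m x hx
  have pow : ∀ m (x : FreeNilpotentLie k s), (N ^ m) x ∈ lowerCentralSeries ℝ (FreeNilpotentLie k s) (FreeNilpotentLie k s) m := by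
    intro m
    induction m with
    | zero => intro x; exact LieSubmodule.mem_top _
    | succ m ihm =>
      intro x
      rw [pow_succ', Module.End.mul_apply]
      exact hN m _ (ihm x)
  have hnil : IsNilpotent N := by
    refine ⟨s, ?_⟩
    ext x
    have := pow s x
    rw [F_lcs_bot] at this
    simpa using this
  have hunit : IsUnit ψ.toLinearMap := by
    have heq : ψ.toLinearMap = 1 + N := by
      ext x; simp [hNdef]
    rw [heq]
    exact hnil.isUnit_one_add
  exact (Module.End.isUnit_iff _).1 hunit

end FreeNilpAux

section LinearAlg

lemma sum_equiv_smul {k : ℕ} {M : Type*} [AddCommGroup M] [Module ℝ M]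
    (e : (Fin k → ℝ) ≃ₗ[ℝ] (Fin k → ℝ)) (w : Fin k → M) (i : Fin k) :
    ∑ j, e (Pi.single i 1) j • (∑ l, e.symm (Pi.single j 1) l • w l) = w i := by
  classical
  set T : (Fin k → ℝ) →ₗ[ℝ] M := Fintype.linearCombination ℝ w with hT
  set c : Fin k → ℝ := e (Pi.single i 1) with hc
  have hTs : ∀ d : Fin k → ℝ, ∑ l, d l • w l = T d := fun d =>
    (Fintype.linearCombination_apply ℝ w d).symm
  have hsingle : ∑ j, c j • (Pi.single j 1 : Fin k → ℝ) = c := by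
    have h1 : ∀ j : Fin k, c j • (Pi.single j 1 : Fin k → ℝ) = Pi.single j (c j) := fun j => by
      rw [← Pi.single_smul, smul_eq_mul, mul_one]
    rw [Finset.sum_congr rfl fun j _ => h1 j, Finset.univ_sum_single]
  calc ∑ j, c j • (∑ l, e.symm (Pi.single j 1) l • w l)
      = ∑ j, c j • T (e.symm (Pi.single j 1)) := by simp_rw [hTs]
    _ = ∑ j, T (e.symm (c j • (Pi.single j 1 : Fin k → ℝ))) := by
        simp_rw [map_smul]
    _ = T (e.symm (∑ j, c j • (Pi.single j 1 : Fin k → ℝ))) := by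
        rw [← map_sum, ← map_sum]
    _ = T (Pi.single i 1) := by rw [hsingle, hc, e.symm_apply_apply]
    _ = w i := by rw [hT, Fintype.linearCombination_apply_single, one_smul]

lemma exists_equiv_comp {n : ℕ} {V : Type*} [AddCommGroup V] [Module ℝ V]
    [FiniteDimensional ℝ V] (f g : (Fin n → ℝ) →ₗ[ℝ] V)
    (hf : Function.Surjective f) (hg : Function.Surjective g) :
    ∃ e : (Fin n → ℝ) ≃ₗ[ℝ] (Fin n → ℝ), ∀ x, f (e x) = g x := by
  obtain ⟨r, hr⟩ := f.exists_rightInverse_of_surjective (LinearMap.range_eq_top.2 hf)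
  obtain ⟨q, hq⟩ :=
    (LinearMap.ker g).subtype.exists_leftInverse_of_injective (Submodule.ker_subtype _)
  have hrank : Module.finrank ℝ (LinearMap.ker g) = Module.finrank ℝ (LinearMap.ker f) := by
    have h1 := f.finrank_range_add_finrank_ker
    have h2 := g.finrank_range_add_finrank_ker
    rw [LinearMap.range_eq_top.2 hf, finrank_top] at h1
    rw [LinearMap.range_eq_top.2 hg, finrank_top] at h2
    omega
  let j : LinearMap.ker g ≃ₗ[ℝ] LinearMap.ker f := LinearEquiv.ofFinrankEq _ _ hrank
  set e₀ : (Fin n → ℝ) →ₗ[ℝ] (Fin n → ℝ) :=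
    r ∘ₗ g + (LinearMap.ker f).subtype ∘ₗ (j : LinearMap.ker g →ₗ[ℝ] LinearMap.ker f) ∘ₗ q
    with he₀
  have hfe : ∀ x, f (e₀ x) = g x := by
    intro x
    rw [he₀]
    simp only [LinearMap.add_apply, LinearMap.comp_apply, map_add, LinearEquiv.coe_coe]
    have h1 : f (r (g x)) = g x := LinearMap.congr_fun hr (g x)
    have h2 : f ((LinearMap.ker f).subtype (j (q x))) = 0 := (j (q x)).2
    rw [h1, h2, add_zero]
  have hinj : Function.Injective e₀ := by
    rw [← LinearMap.ker_eq_bot, Submodule.eq_bot_iff]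
    intro x hx
    rw [LinearMap.mem_ker] at hx
    have hgx : g x = 0 := by rw [← hfe x, hx, map_zero]
    have hxker : x ∈ LinearMap.ker g := LinearMap.mem_ker.2 hgx
    have hqx : q x = ⟨x, hxker⟩ := by
      have := LinearMap.congr_fun hq (⟨x, hxker⟩ : LinearMap.ker g)
      simpa using this
    have hzero : (0 : Fin n → ℝ) = ((LinearMap.ker f).subtype (j ⟨x, hxker⟩)) := by
      rw [← hx, he₀]
      simp only [LinearMap.add_apply, LinearMap.comp_apply, LinearEquiv.coe_coe]
      rw [hgx, map_zero, hqx, zero_add]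
    have : j ⟨x, hxker⟩ = 0 := by
      apply Subtype.ext
      simpa using hzero.symm
    have : (⟨x, hxker⟩ : LinearMap.ker g) = 0 := j.injective (by simpa using this)
    simpa using congrArg Subtype.val this
  have hbij : Function.Bijective e₀ := ⟨hinj, LinearMap.injective_iff_surjective.1 hinj⟩
  exact ⟨LinearEquiv.ofBijective e₀ hbij, fun x => hfe _⟩

end LinearAlg

lemma lieHom_map_sum {L : Type*} [LieRing L] [LieAlgebra ℝ L] {L' : Type*} [LieRing L']
    [LieAlgebra ℝ L'] (f : L →ₗ⁅ℝ⁆ L') {ι : Type*} (t : Finset ι) (g : ι → L) :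
    f (∑ i ∈ t, g i) = ∑ i ∈ t, f (g i) := by
  exact map_sum (f : L →ₗ[ℝ] L') g t

theorem free_nilpotent_aut_orbit
    {𝔤 : Type*} [LieRing 𝔤] [LieAlgebra ℝ 𝔤] [Module.Finite ℝ 𝔤]
    (k s : ℕ)
    (hnil : LieModule.lowerCentralSeries ℝ 𝔤 𝔤 s = ⊥)
    (hk : Module.finrank ℝ
      (𝔤 ⧸ (LieSubmodule.toSubmodule (⁅(⊤ : LieIdeal ℝ 𝔤), (⊤ : LieIdeal ℝ 𝔤)⁆ : LieIdeal ℝ 𝔤)))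
        ≤ k)
    (ev : (Fin k → 𝔤) → (FreeNilpotentLie k s →ₗ⁅ℝ⁆ 𝔤))
    (hev : ∀ (X : Fin k → 𝔤) (i : Fin k), ev X (freeNilpotentGen k s i) = X i)
    (X X' : Fin k → 𝔤)
    (hX : Submodule.span ℝ (Set.range X) ⊔
      LieSubmodule.toSubmodule (⁅(⊤ : LieIdeal ℝ 𝔤), (⊤ : LieIdeal ℝ 𝔤)⁆ : LieIdeal ℝ 𝔤) = ⊤)
    (hX' : Submodule.span ℝ (Set.range X') ⊔
      LieSubmodule.toSubmodule (⁅(⊤ : LieIdeal ℝ 𝔤), (⊤ : LieIdeal ℝ 𝔤)⁆ : LieIdeal ℝ 𝔤) = ⊤) :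
    ∃ α : FreeNilpotentLie k s ≃ₗ⁅ℝ⁆ FreeNilpotentLie k s,
      ∀ i : Fin k, X' i = ev X (α (freeNilpotentGen k s i)) := by
  classical
  have hD1 : (⁅(⊤ : LieIdeal ℝ 𝔤), (⊤ : LieIdeal ℝ 𝔤)⁆ : LieIdeal ℝ 𝔤) =
      lowerCentralSeries ℝ 𝔤 𝔤 1 := by
    rw [LieModule.lowerCentralSeries_succ, lowerCentralSeries_zero]
  set DS : Submodule ℝ 𝔤 :=
    LieSubmodule.toSubmodule (⁅(⊤ : LieIdeal ℝ 𝔤), (⊤ : LieIdeal ℝ 𝔤)⁆ : LieIdeal ℝ 𝔤) with hDS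
  have hsurj : ∀ Z : Fin k → 𝔤,
      Submodule.span ℝ (Set.range Z) ⊔ DS = ⊤ → Function.Surjective (ev Z) := by
    intro Z hZ
    have hr : (ev Z).range = ⊤ := by
      apply subalg_eq_top_of_sup_derived (s := s) _ hnil
      rw [eq_top_iff, ← hZ]
      refine sup_le_sup ?_ ?_
      · refine Submodule.span_le.2 ?_
        rintro _ ⟨i, rfl⟩
        exact ⟨freeNilpotentGen k s i, hev Z i⟩
      · exact le_of_eq (by rw [hDS, hD1])
    intro y
    have hy : y ∈ (ev Z).range := by rw [hr]; trivial
    exact ((ev Z).mem_range y).1 hy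
  set π := DS.mkQ with hπ
  have hsurjV : ∀ Z : Fin k → 𝔤, Submodule.span ℝ (Set.range Z) ⊔ DS = ⊤ →
      Function.Surjective (Fintype.linearCombination ℝ (fun i => π (Z i))) := by
    intro Z hZ
    rw [← LinearMap.range_eq_top, eq_top_iff]
    have hsp : Submodule.span ℝ (Set.range fun i => π (Z i)) = ⊤ := by
      have hmap := congrArg (Submodule.map π) hZ
      rw [Submodule.map_sup, Submodule.map_span, Submodule.map_top, Submodule.range_mkQ] at hmap
      have hbot : Submodule.map π DS = ⊥ := by
        rw [← le_bot_iff, Submodule.map_le_iff_le_comap]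
        intro x hx
        rw [Submodule.mem_comap, Submodule.mem_bot, hπ, Submodule.mkQ_apply,
          Submodule.Quotient.mk_eq_zero]
        exact hx
      rw [hbot, sup_bot_eq] at hmap
      rw [← hmap, ← Set.range_comp]
      rfl
    rw [← hsp]
    refine Submodule.span_le.2 ?_
    rintro _ ⟨i, rfl⟩
    exact ⟨Pi.single i 1, by rw [Fintype.linearCombination_apply_single, one_smul]⟩
  obtain ⟨e, he⟩ := exists_equiv_comp _ _ (hsurjV X hX) (hsurjV X' hX')
  set A : Fin k → Fin k → ℝ := fun i => e (Pi.single i 1) with hA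
  have hc : ∀ i, X' i - ∑ j, A i j • X j ∈
      (⁅(⊤ : LieIdeal ℝ 𝔤), (⊤ : LieIdeal ℝ 𝔤)⁆ : LieIdeal ℝ 𝔤) := by
    intro i
    have h1 := he (Pi.single i 1)
    rw [Fintype.linearCombination_apply_single, one_smul] at h1
    have h2 : π (∑ j, A i j • X j) = π (X' i) := by
      rw [map_sum]
      simp_rw [map_smul]
      exact (Fintype.linearCombination_apply ℝ (fun i => π (X i)) (A i)).symm.trans h1
    have h3 : π (X' i - ∑ j, A i j • X j) = 0 := by rw [map_sub, h2, sub_self]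
    rw [hπ, Submodule.mkQ_apply, Submodule.Quotient.mk_eq_zero] at h3
    rwa [hDS, LieSubmodule.mem_toSubmodule] at h3
  have hXsurj := hsurj X hX
  have hmap := LieIdeal.lowerCentralSeries_map_eq (R := ℝ) 1 hXsurj
  have hβ : ∀ i, ∃ β,
      β ∈ lowerCentralSeries ℝ (FreeNilpotentLie k s) (FreeNilpotentLie k s) 1 ∧
      ev X β = X' i - ∑ j, A i j • X j := by
    intro i
    have h5 : X' i - ∑ j, A i j • X j ∈
        LieIdeal.map (ev X)
          (lowerCentralSeries ℝ (FreeNilpotentLie k s) (FreeNilpotentLie k s) 1) := by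
      rw [hmap, ← hD1]
      exact hc i
    obtain ⟨⟨b0, hb0⟩, hb2⟩ := LieIdeal.mem_map_of_surjective hXsurj h5
    exact ⟨b0, hb0, hb2⟩
  choose β hβmem hβval using hβ
  set B : Fin k → Fin k → ℝ := fun i => e.symm (Pi.single i 1) with hB
  set Y : Fin k → FreeNilpotentLie k s :=
    fun i => (∑ j, A i j • freeNilpotentGen k s j) + β i with hY
  set Z : Fin k → FreeNilpotentLie k s :=
    fun i => ∑ j, B i j • freeNilpotentGen k s j with hZdef
  set φ := FreeNilpAux.endo k s Y with hφdef
  set φb := FreeNilpAux.endo k s Z with hφbdef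
  have hψ1 : ∀ i, (φb.comp φ) (freeNilpotentGen k s i) - freeNilpotentGen k s i ∈
      lowerCentralSeries ℝ (FreeNilpotentLie k s) (FreeNilpotentLie k s) 1 := by
    intro i
    have hcomp : (φb.comp φ) (freeNilpotentGen k s i) =
        freeNilpotentGen k s i + φb (β i) := by
      rw [LieHom.comp_apply, hφdef, FreeNilpAux.endo_gen, hY]
      rw [map_add]
      congr 1
      rw [lieHom_map_sum]
      simp_rw [map_smul, hφbdef, FreeNilpAux.endo_gen, hZdef]
      exact sum_equiv_smul e (freeNilpotentGen k s) i
    rw [hcomp, add_sub_cancel_left]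
    exact lieHom_mem_lcs φb 1 (hβmem i)
  have hψ2 : ∀ i, (φ.comp φb) (freeNilpotentGen k s i) - freeNilpotentGen k s i ∈
      lowerCentralSeries ℝ (FreeNilpotentLie k s) (FreeNilpotentLie k s) 1 := by
    intro i
    have hcomp : (φ.comp φb) (freeNilpotentGen k s i) =
        freeNilpotentGen k s i + ∑ j, B i j • β j := by
      rw [LieHom.comp_apply, hφbdef, FreeNilpAux.endo_gen, hZdef]
      rw [lieHom_map_sum]
      simp_rw [map_smul, hφdef, FreeNilpAux.endo_gen, hY]
      simp_rw [smul_add]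
      rw [Finset.sum_add_distrib]
      congr 1
      have hsum := sum_equiv_smul e.symm (freeNilpotentGen k s) i
      rw [e.symm_symm] at hsum
      exact hsum
    rw [hcomp, add_sub_cancel_left]
    exact Submodule.sum_mem _ (fun j _ =>
      Submodule.smul_mem _ _ ((LieSubmodule.mem_toSubmodule _).2 (hβmem j)))
  have hb1 := FreeNilpAux.unipotent_bij k s _ hψ1
  have hb2 := FreeNilpAux.unipotent_bij k s _ hψ2
  have hφbij : Function.Bijective φ := by
    constructor
    · intro a b hab
      exact hb1.1 (by rw [LieHom.comp_apply, LieHom.comp_apply, hab])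
    · intro y
      obtain ⟨z, hz⟩ := hb2.2 y
      exact ⟨φb z, hz⟩
  refine ⟨LieEquiv.ofBijective φ hφbij, fun i => ?_⟩
  have hαφ : (LieEquiv.ofBijective φ hφbij) (freeNilpotentGen k s i) =
      φ (freeNilpotentGen k s i) := rfl
  rw [hαφ, hφdef, FreeNilpAux.endo_gen, hY]
  rw [map_add, lieHom_map_sum]
  simp_rw [map_smul, hev]
  rw [hβval i]
  rw [add_sub_cancel]
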